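/- In the KLR algebra R(n), the intertwiners satisfy the braid relation φ_a φ_{a+1} φ_a = φ_{a+1} φ_a φ_{a+1} for 1 ≤ a ≤ n−2. -/

import Mathlib

open scoped BigOperators

/-- Generators of the Khovanov–Lauda–Rouquier algebra `R(n)`:
idempotents `e(ν)` for `ν ∈ Iⁿ`, polynomial generators `x_a` (`1 ≤ a ≤ n`) and
intertwining generators `τ_l` (`1 ≤ l ≤ n−1`). -/
inductive KLRGen (I : Type) (n : ℕ) : Type where
  | e : (Fin n → I) → KLRGen I n
  | x : Fin n → KLRGen I n
  | t : Fin (n - 1) → KLRGen I n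

/-- The free algebra on the KLR generators. -/
abbrev KLRFree (k I : Type) [CommRing k] (n : ℕ) := FreeAlgebra k (KLRGen I n)

/-- The generator `e(ν)` in the free algebra. -/
def KE (k : Type) [CommRing k] {I : Type} {n : ℕ} (ν : Fin n → I) : KLRFree k I n :=
  FreeAlgebra.ι k (KLRGen.e ν)

/-- The generator `x_a` in the free algebra. -/
def KX (k : Type) [CommRing k] {I : Type} {n : ℕ} (a : Fin n) : KLRFree k I n :=
  FreeAlgebra.ι k (KLRGen.x a)

/-- The generator `τ_l` in the free algebra. -/
def KT (k : Type) [CommRing k] {I : Type} {n : ℕ} (l : Fin (n - 1)) : KLRFree k I n :=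
  FreeAlgebra.ι k (KLRGen.t l)

/-- The position `l` regarded in `Fin n`. -/
def posL {n : ℕ} (l : Fin (n - 1)) : Fin n := ⟨l.val, by have := l.isLt; omega⟩

/-- The position `l + 1` regarded in `Fin n`. -/
def posR {n : ℕ} (l : Fin (n - 1)) : Fin n := ⟨l.val + 1, by have := l.isLt; omega⟩

/-- Evaluation of a two-variable polynomial `q ∈ k[u][v]` (outer variable `u`,
inner variable `v`) at a pair of elements of a `k`-algebra `A`:
`evalQ q a b = q(a, b)`. -/
noncomputable def evalQ {k A : Type} [CommRing k] [Ring A] [Algebra k A]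
    (q : Polynomial (Polynomial k)) (u v : A) : A :=
  Polynomial.eval u (q.map (Polynomial.aeval v).toRingHom)

/-- The two-variable "divided difference" `(q(u,v) − q(w,v))/(u − w)` of a polynomial
`q ∈ k[u][v]`, evaluated at elements `u, w, v` of a `k`-algebra `A`. -/
noncomputable def QbarE {k A : Type} [CommRing k] [Ring A] [Algebra k A]
    (q : Polynomial (Polynomial k)) (u w v : A) : A :=
  ∑ p ∈ q.support, (∑ i ∈ Finset.range p, u ^ i * w ^ (p - 1 - i)) *
    Polynomial.aeval v (q.coeff p)

/-- The defining relations of the Khovanov–Lauda–Rouquier algebra `R(n)` associated with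
the family of polynomials `Q = (Q_{ij}(u,v))_{i,j ∈ I}` (Khovanov–Lauda, Rouquier). -/
inductive KLRRel (k I : Type) [CommRing k] [Fintype I] [DecidableEq I] (n : ℕ)
    (Q : I → I → Polynomial (Polynomial k)) :
    KLRFree k I n → KLRFree k I n → Prop where
  | ee (ν ν' : Fin n → I) :
      KLRRel k I n Q (KE k ν * KE k ν') (if ν = ν' then KE k ν else 0)
  | esum :
      KLRRel k I n Q (∑ ν : Fin n → I, KE k ν) 1
  | xx (a b : Fin n) :
      KLRRel k I n Q (KX k a * KX k b) (KX k b * KX k a)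
  | xe (a : Fin n) (ν : Fin n → I) :
      KLRRel k I n Q (KX k a * KE k ν) (KE k ν * KX k a)
  | te (l : Fin (n - 1)) (ν : Fin n → I) :
      KLRRel k I n Q (KT k l * KE k ν)
        (KE k (ν ∘ Equiv.swap (posL l) (posR l)) * KT k l)
  | tt (l m : Fin (n - 1)) (h : l.val + 1 < m.val ∨ m.val + 1 < l.val) :
      KLRRel k I n Q (KT k l * KT k m) (KT k m * KT k l)
  | tsq (l : Fin (n - 1)) (ν : Fin n → I) :
      KLRRel k I n Q (KT k l * KT k l * KE k ν)
        (evalQ (Q (ν (posL l)) (ν (posR l))) (KX k (posL l)) (KX k (posR l)) * KE k ν)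
  | txe (l : Fin (n - 1)) (b : Fin n) (ν : Fin n → I) :
      KLRRel k I n Q
        (KT k l * KX k b * KE k ν - KX k (Equiv.swap (posL l) (posR l) b) * KT k l * KE k ν)
        (if ν (posL l) = ν (posR l) then
          (if b = posL l then -(KE k ν) else if b = posR l then KE k ν else 0)
        else 0)
  | braid (l m : Fin (n - 1)) (hm : m.val = l.val + 1) (ν : Fin n → I) :
      KLRRel k I n Q
        (KT k m * KT k l * KT k m * KE k ν - KT k l * KT k m * KT k l * KE k ν)
        (if ν (posL l) = ν (posR m) then
          QbarE (Q (ν (posL l)) (ν (posR l))) (KX k (posL l)) (KX k (posR m)) (KX k (posR l))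
            * KE k ν
        else 0)

/-- The Khovanov–Lauda–Rouquier algebra `R(n)` over `k` associated with the Cartan datum
indexed by `I` and the polynomials `Q_{ij}`. -/
abbrev KLR (k I : Type) [CommRing k] [Fintype I] [DecidableEq I] (n : ℕ)
    (Q : I → I → Polynomial (Polynomial k)) := RingQuot (KLRRel k I n Q)

/-- The idempotent `e(ν)` in `R(n)`. -/
noncomputable def KLR.E (k I : Type) [CommRing k] [Fintype I] [DecidableEq I] (n : ℕ)
    (Q : I → I → Polynomial (Polynomial k)) (ν : Fin n → I) : KLR k I n Q :=
  RingQuot.mkAlgHom k (KLRRel k I n Q) (KE k ν)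

/-- The element `x_a` in `R(n)`. -/
noncomputable def KLR.X (k I : Type) [CommRing k] [Fintype I] [DecidableEq I] (n : ℕ)
    (Q : I → I → Polynomial (Polynomial k)) (a : Fin n) : KLR k I n Q :=
  RingQuot.mkAlgHom k (KLRRel k I n Q) (KX k a)

/-- The element `τ_l` in `R(n)`. -/
noncomputable def KLR.T (k I : Type) [CommRing k] [Fintype I] [DecidableEq I] (n : ℕ)
    (Q : I → I → Polynomial (Polynomial k)) (l : Fin (n - 1)) : KLR k I n Q :=
  RingQuot.mkAlgHom k (KLRRel k I n Q) (KT k l)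

/-- The intertwiner `φ_a` of the KLR algebra, defined by
`φ_a e(ν) = ((x_a − x_{a+1})τ_a + 1) e(ν)` if `ν_a = ν_{a+1}` and
`φ_a e(ν) = τ_a e(ν)` otherwise. -/
noncomputable def KLR.phi (k I : Type) [CommRing k] [Fintype I] [DecidableEq I] (n : ℕ)
    (Q : I → I → Polynomial (Polynomial k)) (l : Fin (n - 1)) : KLR k I n Q :=
  ∑ ν : Fin n → I,
    (if ν (posL l) = ν (posR l) then
        (KLR.X k I n Q (posL l) - KLR.X k I n Q (posR l)) * KLR.T k I n Q l + 1
      else KLR.T k I n Q l) * KLR.E k I n Q ν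


section KLRBraidAux

open Polynomial

variable {k : Type} [CommRing k]

private lemma commute_aeval {A : Type} [Ring A] [Algebra k A] {u v : A}
    (h : Commute u v) (p : Polynomial k) : Commute u (Polynomial.aeval v p) := by
  induction p using Polynomial.induction_on with
  | C c =>
      rw [Polynomial.aeval_C]
      exact Commute.symm (Algebra.commutes c u)
  | add p q hp hq =>
      rw [map_add]
      exact hp.add_right hq
  | monomial m c _ =>
      rw [map_mul, Polynomial.aeval_C, map_pow, Polynomial.aeval_X]
      exact (Commute.symm (Algebra.commutes c u)).mul_right (h.pow_right (m + 1))

private lemma map_evalQ {A B : Type} [Ring A] [Algebra k A] [Ring B] [Algebra k B]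
    (f : A →ₐ[k] B) (q : Polynomial (Polynomial k)) (u v : A) :
    f (evalQ q u v) = evalQ q (f u) (f v) := by
  unfold evalQ
  rw [Polynomial.eval_map, Polynomial.eval_map]
  have := Polynomial.hom_eval₂ q (Polynomial.aeval v).toRingHom f.toRingHom u
  rw [show f (Polynomial.eval₂ (Polynomial.aeval v).toRingHom u q)
      = f.toRingHom (Polynomial.eval₂ (Polynomial.aeval v).toRingHom u q) from rfl, this]
  congr 1
  have : (Polynomial.aeval (f v)) = f.comp (Polynomial.aeval v) := Polynomial.aeval_algHom f v
  rw [this]; rfl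

private lemma map_QbarE {A B : Type} [Ring A] [Algebra k A] [Ring B] [Algebra k B]
    (f : A →ₐ[k] B) (q : Polynomial (Polynomial k)) (u w v : A) :
    f (QbarE q u w v) = QbarE q (f u) (f w) (f v) := by
  unfold QbarE
  rw [map_sum]
  refine Finset.sum_congr rfl fun p _ => ?_
  rw [map_mul, map_sum]
  congr 1
  · exact Finset.sum_congr rfl fun i _ => by rw [map_mul, map_pow, map_pow]
  · have : (Polynomial.aeval (f v)) = f.comp (Polynomial.aeval v) := Polynomial.aeval_algHom f v
    rw [this]; rfl

private lemma evalQ_eq_sum {A : Type} [Ring A] [Algebra k A]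
    (q : Polynomial (Polynomial k)) (u v : A)
    (hc : ∀ c : Polynomial k, Commute u (Polynomial.aeval v c)) :
    evalQ q u v = ∑ p ∈ q.support, u ^ p * Polynomial.aeval v (q.coeff p) := by
  unfold evalQ
  rw [Polynomial.eval_eq_sum, Polynomial.sum_def]
  rw [Finset.sum_subset (Polynomial.support_map_subset _ _)]
  · refine Finset.sum_congr rfl fun p _ => ?_
    rw [Polynomial.coeff_map]
    exact ((hc (q.coeff p)).symm.pow_right p).eq
  · intro p _ hp
    rw [Polynomial.notMem_support_iff.mp hp, zero_mul]

private lemma sub_mul_QbarE {A : Type} [Ring A] [Algebra k A]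
    (q : Polynomial (Polynomial k)) (u w v : A)
    (huw : Commute u w)
    (hu : ∀ c : Polynomial k, Commute u (Polynomial.aeval v c))
    (hw : ∀ c : Polynomial k, Commute w (Polynomial.aeval v c)) :
    (u - w) * QbarE q u w v = evalQ q u v - evalQ q w v := by
  rw [evalQ_eq_sum q u v hu, evalQ_eq_sum q w v hw]
  unfold QbarE
  rw [Finset.mul_sum, ← Finset.sum_sub_distrib]
  refine Finset.sum_congr rfl fun p _ => ?_
  rw [← mul_assoc, huw.mul_geom_sum₂ p, sub_mul]

private lemma evalQ_zero {A : Type} [Ring A] [Algebra k A] (u v : A) :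
    evalQ (0 : Polynomial (Polynomial k)) u v = 0 := by
  unfold evalQ
  simp

private lemma QbarE_zero {A : Type} [Ring A] [Algebra k A] (u w v : A) :
    QbarE (0 : Polynomial (Polynomial k)) u w v = 0 := by
  unfold QbarE
  simp

private lemma evalQ_swap {A : Type} [Ring A] [Algebra k A]
    (q : Polynomial (Polynomial k)) (u v : A) (huv : Commute u v) :
    evalQ (evalQ (A := Polynomial (Polynomial k)) q (Polynomial.C Polynomial.X) Polynomial.X)
      u v = evalQ q v u := by
  have hcomm : ∀ c : Polynomial k, Commute ((Polynomial.aeval v) c) u :=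
    fun c => (commute_aeval huv c).symm
  set Φ : Polynomial (Polynomial k) →ₐ[k] A :=
    Polynomial.eval₂AlgHom (Polynomial.aeval v) u hcomm with hΦ
  have hΦ_eval : ∀ r : Polynomial (Polynomial k), Φ r = evalQ r u v := by
    intro r
    rw [hΦ]
    simp only [Polynomial.eval₂AlgHom_apply]
    rw [evalQ, Polynomial.eval_map]
    rfl
  have h1 : Φ (Polynomial.C Polynomial.X) = v := by
    rw [hΦ]; simp
  have h2 : Φ (Polynomial.X) = u := by
    rw [hΦ]; simp
  rw [← hΦ_eval, map_evalQ Φ q _ _, h1, h2]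

end KLRBraidAux


section KLRRelLemmas

variable {k I : Type} [CommRing k] [Fintype I] [DecidableEq I] {n : ℕ}
  {Q : I → I → Polynomial (Polynomial k)}

private lemma relQ {x y : KLRFree k I n} (h : KLRRel k I n Q x y) :
    RingQuot.mkAlgHom k (KLRRel k I n Q) x = RingQuot.mkAlgHom k (KLRRel k I n Q) y :=
  RingQuot.mkAlgHom_rel _ h

private lemma EE (ν ν' : Fin n → I) :
    KLR.E k I n Q ν * KLR.E k I n Q ν' = if ν = ν' then KLR.E k I n Q ν else 0 := by
  have := relQ (Q := Q) (KLRRel.ee ν ν')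
  rw [map_mul, apply_ite (RingQuot.mkAlgHom k (KLRRel k I n Q)), map_zero] at this
  exact this

private lemma Esum : (∑ ν : Fin n → I, KLR.E k I n Q ν) = 1 := by
  have := relQ (KLRRel.esum (k := k) (I := I) (n := n) (Q := Q))
  rw [map_sum, map_one] at this
  exact this

private lemma XXc (p q : Fin n) :
    KLR.X k I n Q p * KLR.X k I n Q q = KLR.X k I n Q q * KLR.X k I n Q p := by
  have := relQ (Q := Q) (KLRRel.xx p q)
  rw [map_mul, map_mul] at this
  exact this

private lemma XEc (p : Fin n) (ν : Fin n → I) :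
    KLR.X k I n Q p * KLR.E k I n Q ν = KLR.E k I n Q ν * KLR.X k I n Q p := by
  have := relQ (Q := Q) (KLRRel.xe p ν)
  rw [map_mul, map_mul] at this
  exact this

private lemma TEc (l : Fin (n - 1)) (ν : Fin n → I) :
    KLR.T k I n Q l * KLR.E k I n Q ν
      = KLR.E k I n Q (ν ∘ Equiv.swap (posL l) (posR l)) * KLR.T k I n Q l := by
  have := relQ (Q := Q) (KLRRel.te l ν)
  rw [map_mul, map_mul] at this
  exact this

private lemma Tsqc (l : Fin (n - 1)) (ν : Fin n → I) :
    KLR.T k I n Q l * KLR.T k I n Q l * KLR.E k I n Q ν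
      = evalQ (Q (ν (posL l)) (ν (posR l))) (KLR.X k I n Q (posL l)) (KLR.X k I n Q (posR l))
          * KLR.E k I n Q ν := by
  have := relQ (Q := Q) (KLRRel.tsq l ν)
  rw [map_mul, map_mul, map_mul, map_evalQ] at this
  exact this

private lemma TXEc (l : Fin (n - 1)) (b : Fin n) (ν : Fin n → I) :
    KLR.T k I n Q l * KLR.X k I n Q b * KLR.E k I n Q ν
      - KLR.X k I n Q (Equiv.swap (posL l) (posR l) b) * KLR.T k I n Q l * KLR.E k I n Q ν
      = (if ν (posL l) = ν (posR l) then
          (if b = posL l then -(KLR.E k I n Q ν) else if b = posR l then KLR.E k I n Q ν else 0)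
        else 0) := by
  have := relQ (Q := Q) (KLRRel.txe l b ν)
  simp only [map_sub, map_mul, apply_ite (RingQuot.mkAlgHom k (KLRRel k I n Q)),
    map_neg, map_zero] at this
  exact this

private lemma braidc (l m : Fin (n - 1)) (hm : m.val = l.val + 1) (ν : Fin n → I) :
    KLR.T k I n Q m * KLR.T k I n Q l * KLR.T k I n Q m * KLR.E k I n Q ν
      - KLR.T k I n Q l * KLR.T k I n Q m * KLR.T k I n Q l * KLR.E k I n Q ν
      = (if ν (posL l) = ν (posR m) then
          QbarE (Q (ν (posL l)) (ν (posR l))) (KLR.X k I n Q (posL l)) (KLR.X k I n Q (posR m))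
            (KLR.X k I n Q (posR l)) * KLR.E k I n Q ν
        else 0) := by
  have := relQ (Q := Q) (KLRRel.braid l m hm ν)
  rw [map_sub, map_mul, map_mul, map_mul, map_mul, map_mul, map_mul,
    apply_ite (RingQuot.mkAlgHom k (KLRRel k I n Q)), map_mul, map_QbarE, map_zero] at this
  exact this

/-! z-forms -/

private lemma Eself (ν : Fin n → I) :
    KLR.E k I n Q ν * KLR.E k I n Q ν = KLR.E k I n Q ν := by
  rw [EE, if_pos rfl]

private lemma locX {ν : Fin n → I} {z : KLR k I n Q} (p : Fin n)
    (h : KLR.E k I n Q ν * z = z) :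
    KLR.E k I n Q ν * (KLR.X k I n Q p * z) = KLR.X k I n Q p * z := by
  rw [← mul_assoc, ← XEc, mul_assoc, h]

private lemma locT {ν : Fin n → I} {z : KLR k I n Q} (l : Fin (n - 1))
    (h : KLR.E k I n Q ν * z = z) :
    KLR.E k I n Q (ν ∘ Equiv.swap (posL l) (posR l)) * (KLR.T k I n Q l * z)
      = KLR.T k I n Q l * z := by
  rw [← mul_assoc, ← TEc, mul_assoc, h]

private lemma XXz (p q : Fin n) (z : KLR k I n Q) :
    KLR.X k I n Q p * (KLR.X k I n Q q * z) = KLR.X k I n Q q * (KLR.X k I n Q p * z) := by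
  rw [← mul_assoc, XXc, mul_assoc]

private lemma TXz {ν : Fin n → I} {z : KLR k I n Q} (l : Fin (n - 1)) (b : Fin n)
    (h : KLR.E k I n Q ν * z = z) :
    KLR.T k I n Q l * (KLR.X k I n Q b * z)
      = KLR.X k I n Q (Equiv.swap (posL l) (posR l) b) * (KLR.T k I n Q l * z)
        + (if ν (posL l) = ν (posR l) then
            (if b = posL l then -z else if b = posR l then z else 0)
          else 0) := by
  have base := TXEc (Q := Q) l b ν
  have h2 := congrArg (· * z) (sub_eq_iff_eq_add.mp base)
  simp only [add_mul, mul_assoc, h] at h2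
  rw [h2, add_comm]
  congr 1
  split_ifs
  · rw [neg_mul (KLR.E k I n Q ν) z, h]
  · exact h
  · exact zero_mul z
  · exact zero_mul z

private lemma Tsqz {ν : Fin n → I} {z : KLR k I n Q} (l : Fin (n - 1))
    (h : KLR.E k I n Q ν * z = z) :
    KLR.T k I n Q l * (KLR.T k I n Q l * z)
      = evalQ (Q (ν (posL l)) (ν (posR l))) (KLR.X k I n Q (posL l)) (KLR.X k I n Q (posR l))
          * z := by
  have h2 := congrArg (· * z) (Tsqc (Q := Q) l ν)
  simp only [mul_assoc, h] at h2
  exact h2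

private lemma Tsqz0 {ν : Fin n → I} {z : KLR k I n Q} (l : Fin (n - 1))
    (hQdiag : ∀ i : I, Q i i = 0) (hν : ν (posL l) = ν (posR l))
    (h : KLR.E k I n Q ν * z = z) :
    KLR.T k I n Q l * (KLR.T k I n Q l * z) = 0 := by
  rw [Tsqz l h, hν, hQdiag, evalQ_zero, zero_mul]

private lemma braidz {ν : Fin n → I} {z : KLR k I n Q} (l m : Fin (n - 1))
    (hm : m.val = l.val + 1) (h : KLR.E k I n Q ν * z = z) :
    KLR.T k I n Q m * (KLR.T k I n Q l * (KLR.T k I n Q m * z))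
      = KLR.T k I n Q l * (KLR.T k I n Q m * (KLR.T k I n Q l * z))
        + (if ν (posL l) = ν (posR m) then
            QbarE (Q (ν (posL l)) (ν (posR l))) (KLR.X k I n Q (posL l))
              (KLR.X k I n Q (posR m)) (KLR.X k I n Q (posR l)) * z
          else 0) := by
  have h2 := congrArg (· * z) (sub_eq_iff_eq_add.mp (braidc (Q := Q) l m hm ν))
  simp only [add_mul, mul_assoc, h] at h2
  rw [h2, add_comm]
  congr 1
  split_ifs
  · rw [mul_assoc, h]
  · exact zero_mul z

private lemma phiE (l : Fin (n - 1)) (ν : Fin n → I) :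
    KLR.phi k I n Q l * KLR.E k I n Q ν
      = (if ν (posL l) = ν (posR l) then
          (KLR.X k I n Q (posL l) - KLR.X k I n Q (posR l)) * KLR.T k I n Q l + 1
        else KLR.T k I n Q l) * KLR.E k I n Q ν := by
  rw [KLR.phi, Finset.sum_mul]
  rw [Finset.sum_eq_single_of_mem ν (Finset.mem_univ ν)]
  · rw [mul_assoc, Eself]
  · intro μ _ hμ
    rw [mul_assoc, EE, if_neg hμ, mul_zero]

private lemma phiz_eq {ν : Fin n → I} {z : KLR k I n Q} (l : Fin (n - 1))
    (hν : ν (posL l) = ν (posR l)) (h : KLR.E k I n Q ν * z = z) :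
    KLR.phi k I n Q l * z
      = KLR.X k I n Q (posL l) * (KLR.T k I n Q l * z)
        - KLR.X k I n Q (posR l) * (KLR.T k I n Q l * z) + z := by
  conv_lhs => rw [← h]
  rw [← mul_assoc, phiE, if_pos hν]
  simp only [add_mul, sub_mul, one_mul, mul_assoc, h]

private lemma phiz_ne {ν : Fin n → I} {z : KLR k I n Q} (l : Fin (n - 1))
    (hν : ¬ ν (posL l) = ν (posR l)) (h : KLR.E k I n Q ν * z = z) :
    KLR.phi k I n Q l * z = KLR.T k I n Q l * z := by
  conv_lhs => rw [← h]
  rw [← mul_assoc, phiE, if_neg hν, mul_assoc, h]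


private lemma posL_ne_posR (l : Fin (n - 1)) : (posL l : Fin n) ≠ posR l := by
  simp [posL, posR, Fin.ext_iff]

private lemma TX_eqL (l : Fin (n - 1)) {ν : Fin n → I} {z : KLR k I n Q}
    (hν : ν (posL l) = ν (posR l)) (h : KLR.E k I n Q ν * z = z) :
    KLR.T k I n Q l * (KLR.X k I n Q (posL l) * z)
      = KLR.X k I n Q (posR l) * (KLR.T k I n Q l * z) - z := by
  rw [TXz l (posL l) h, Equiv.swap_apply_left, if_pos hν, if_pos rfl, ← sub_eq_add_neg]

private lemma TX_eqR (l : Fin (n - 1)) {ν : Fin n → I} {z : KLR k I n Q}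
    (hν : ν (posL l) = ν (posR l)) (h : KLR.E k I n Q ν * z = z) :
    KLR.T k I n Q l * (KLR.X k I n Q (posR l) * z)
      = KLR.X k I n Q (posL l) * (KLR.T k I n Q l * z) + z := by
  rw [TXz l (posR l) h, Equiv.swap_apply_right, if_pos hν,
    if_neg (posL_ne_posR l).symm, if_pos rfl]

private lemma TX_neL (l : Fin (n - 1)) {ν : Fin n → I} {z : KLR k I n Q}
    (hν : ¬ ν (posL l) = ν (posR l)) (h : KLR.E k I n Q ν * z = z) :
    KLR.T k I n Q l * (KLR.X k I n Q (posL l) * z)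
      = KLR.X k I n Q (posR l) * (KLR.T k I n Q l * z) := by
  rw [TXz l (posL l) h, Equiv.swap_apply_left, if_neg hν, add_zero]

private lemma TX_neR (l : Fin (n - 1)) {ν : Fin n → I} {z : KLR k I n Q}
    (hν : ¬ ν (posL l) = ν (posR l)) (h : KLR.E k I n Q ν * z = z) :
    KLR.T k I n Q l * (KLR.X k I n Q (posR l) * z)
      = KLR.X k I n Q (posL l) * (KLR.T k I n Q l * z) := by
  rw [TXz l (posR l) h, Equiv.swap_apply_right, if_neg hν, add_zero]

private lemma TX_o (l : Fin (n - 1)) (p : Fin n) {ν : Fin n → I} {z : KLR k I n Q}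
    (hp1 : p ≠ posL l) (hp2 : p ≠ posR l) (h : KLR.E k I n Q ν * z = z) :
    KLR.T k I n Q l * (KLR.X k I n Q p * z)
      = KLR.X k I n Q p * (KLR.T k I n Q l * z) := by
  rw [TXz l p h, Equiv.swap_apply_of_ne_of_ne hp1 hp2, if_neg hp1, if_neg hp2,
    ite_self, add_zero]

private lemma phiX (l : Fin (n - 1)) (p : Fin n) {μ : Fin n → I} {z : KLR k I n Q}
    (h : KLR.E k I n Q μ * z = z) :
    KLR.phi k I n Q l * (KLR.X k I n Q p * z)
      = KLR.X k I n Q (Equiv.swap (posL l) (posR l) p) * (KLR.phi k I n Q l * z) := by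
  have hXz := locX (Q := Q) p h
  by_cases hν : μ (posL l) = μ (posR l)
  · rw [phiz_eq l hν hXz, phiz_eq l hν h]
    by_cases hp1 : p = posL l
    · subst hp1
      rw [Equiv.swap_apply_left, TX_eqL l hν h]
      simp only [mul_sub, mul_add]
      rw [XXz (posL l) (posR l) (KLR.T k I n Q l * z)]
      abel
    · by_cases hp2 : p = posR l
      · subst hp2
        rw [Equiv.swap_apply_right, TX_eqR l hν h]
        simp only [mul_sub, mul_add]
        rw [XXz (posR l) (posL l) (KLR.T k I n Q l * z)]
        abel
      · rw [Equiv.swap_apply_of_ne_of_ne hp1 hp2, TX_o l p hp1 hp2 h]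
        simp only [mul_sub, mul_add]
        rw [XXz p (posL l) (KLR.T k I n Q l * z), XXz p (posR l) (KLR.T k I n Q l * z)]
  · rw [phiz_ne l hν hXz, phiz_ne l hν h]
    by_cases hp1 : p = posL l
    · subst hp1
      rw [Equiv.swap_apply_left, TX_neL l hν h]
    · by_cases hp2 : p = posR l
      · subst hp2
        rw [Equiv.swap_apply_right, TX_neR l hν h]
      · rw [Equiv.swap_apply_of_ne_of_ne hp1 hp2, TX_o l p hp1 hp2 h]

private lemma comp_swap_self (μ : Fin n → I) (p q : Fin n) (hpq : μ p = μ q) :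
    μ ∘ Equiv.swap p q = μ := by
  funext x
  simp only [Function.comp_apply]
  rcases eq_or_ne x p with rfl | h1
  · rw [Equiv.swap_apply_left, hpq]
  · rcases eq_or_ne x q with rfl | h2
    · rw [Equiv.swap_apply_right, hpq]
    · rw [Equiv.swap_apply_of_ne_of_ne h1 h2]

private lemma final_helper {M : Type} [AddCommGroup M] {A C G1 G2 E1 E2 : M}
    (h : G1 - G2 = E1 - E2) : A - C + E1 = A + G1 - (C + G2) + E2 := by
  have h2 : A + G1 - (C + G2) + E2 = A - C + (G1 - G2) + E2 := by abel
  rw [h2, h]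
  abel

end KLRRelLemmas

/-- **Braid relation for the intertwiners.**  In the KLR algebra `R(n)`, the intertwiners
satisfy `φ_a φ_{a+1} φ_a = φ_{a+1} φ_a φ_{a+1}` for `1 ≤ a ≤ n−2`. -/
theorem KLR.phi_braid
    (k I : Type) [CommRing k] [Fintype I] [DecidableEq I] (n : ℕ)
    (Q : I → I → Polynomial (Polynomial k))
    (hQdiag : ∀ i : I, Q i i = 0)
    (hQsymm : ∀ i j : I, Q i j
      = evalQ (A := Polynomial (Polynomial k)) (Q j i) (Polynomial.C Polynomial.X)
          Polynomial.X)
    (l m : Fin (n - 1)) (hm : m.val = l.val + 1) :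
    KLR.phi k I n Q l * KLR.phi k I n Q m * KLR.phi k I n Q l
      = KLR.phi k I n Q m * KLR.phi k I n Q l * KLR.phi k I n Q m := by
  classical
  have hexp : ∀ u : KLR k I n Q, u = ∑ ν : Fin n → I, u * KLR.E k I n Q ν := by
    intro u
    rw [← Finset.mul_sum, Esum, mul_one]
  rw [hexp (KLR.phi k I n Q l * KLR.phi k I n Q m * KLR.phi k I n Q l),
      hexp (KLR.phi k I n Q m * KLR.phi k I n Q l * KLR.phi k I n Q m)]
  refine Finset.sum_congr rfl fun ν _ => ?_
  simp only [mul_assoc]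
  have hb : (posL m : Fin n) = posR l := Fin.ext (by simpa [posL, posR] using hm)
  have hab : (posL l : Fin n) ≠ posR l := posL_ne_posR l
  have hbc : (posR l : Fin n) ≠ posR m := by simp [posR, Fin.ext_iff, hm]
  have hac : (posL l : Fin n) ≠ posR m := by
    intro h
    have h2 := congrArg Fin.val h
    simp only [posL, posR, hm] at h2
    omega
  have e1 : Equiv.swap (posL l) (posR l) (posL l) = posR l := Equiv.swap_apply_left _ _
  have e2 : Equiv.swap (posL l) (posR l) (posR l) = posL l := Equiv.swap_apply_right _ _
  have e3 : Equiv.swap (posL l) (posR l) (posR m) = posR m :=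
    Equiv.swap_apply_of_ne_of_ne hac.symm hbc.symm
  have e4 : Equiv.swap (posR l) (posR m) (posL l) = posL l :=
    Equiv.swap_apply_of_ne_of_ne hab hac
  have e5 : Equiv.swap (posR l) (posR m) (posR l) = posR m := Equiv.swap_apply_left _ _
  have e6 : Equiv.swap (posR l) (posR m) (posR m) = posR l := Equiv.swap_apply_right _ _
  -- m-specialised rules
  have phiz_eqm : ∀ {μ : Fin n → I} {z : KLR k I n Q}, μ (posR l) = μ (posR m) →
      KLR.E k I n Q μ * z = z →
      KLR.phi k I n Q m * z = KLR.X k I n Q (posR l) * (KLR.T k I n Q m * z)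
        - KLR.X k I n Q (posR m) * (KLR.T k I n Q m * z) + z := by
    intro μ z hμ hz
    have h0 := phiz_eq (Q := Q) m (by rw [hb]; exact hμ) hz
    rwa [hb] at h0
  have phiz_nem : ∀ {μ : Fin n → I} {z : KLR k I n Q}, ¬ μ (posR l) = μ (posR m) →
      KLR.E k I n Q μ * z = z →
      KLR.phi k I n Q m * z = KLR.T k I n Q m * z := by
    intro μ z hμ hz
    exact phiz_ne (Q := Q) m (by rw [hb]; exact hμ) hz
  have TX_eqLm : ∀ {μ : Fin n → I} {z : KLR k I n Q}, μ (posR l) = μ (posR m) →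
      KLR.E k I n Q μ * z = z →
      KLR.T k I n Q m * (KLR.X k I n Q (posR l) * z)
        = KLR.X k I n Q (posR m) * (KLR.T k I n Q m * z) - z := by
    intro μ z hμ hz
    have h0 := TX_eqL (Q := Q) m (by rw [hb]; exact hμ) hz
    rwa [hb] at h0
  have TX_eqRm : ∀ {μ : Fin n → I} {z : KLR k I n Q}, μ (posR l) = μ (posR m) →
      KLR.E k I n Q μ * z = z →
      KLR.T k I n Q m * (KLR.X k I n Q (posR m) * z)
        = KLR.X k I n Q (posR l) * (KLR.T k I n Q m * z) + z := by
    intro μ z hμ hz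
    have h0 := TX_eqR (Q := Q) m (by rw [hb]; exact hμ) hz
    rwa [hb] at h0
  have TX_neLm : ∀ {μ : Fin n → I} {z : KLR k I n Q}, ¬ μ (posR l) = μ (posR m) →
      KLR.E k I n Q μ * z = z →
      KLR.T k I n Q m * (KLR.X k I n Q (posR l) * z)
        = KLR.X k I n Q (posR m) * (KLR.T k I n Q m * z) := by
    intro μ z hμ hz
    have h0 := TX_neL (Q := Q) m (by rw [hb]; exact hμ) hz
    rwa [hb] at h0
  have TX_neRm : ∀ {μ : Fin n → I} {z : KLR k I n Q}, ¬ μ (posR l) = μ (posR m) →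
      KLR.E k I n Q μ * z = z →
      KLR.T k I n Q m * (KLR.X k I n Q (posR m) * z)
        = KLR.X k I n Q (posR l) * (KLR.T k I n Q m * z) := by
    intro μ z hμ hz
    have h0 := TX_neR (Q := Q) m (by rw [hb]; exact hμ) hz
    rwa [hb] at h0
  have TX_om : ∀ (p : Fin n) {μ : Fin n → I} {z : KLR k I n Q}, p ≠ posR l → p ≠ posR m →
      KLR.E k I n Q μ * z = z →
      KLR.T k I n Q m * (KLR.X k I n Q p * z)
        = KLR.X k I n Q p * (KLR.T k I n Q m * z) := by
    intro p μ z hp1 hp2 hz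
    exact TX_o (Q := Q) m p (by rw [hb]; exact hp1) hp2 hz
  have phiXm : ∀ (p : Fin n) {μ : Fin n → I} {z : KLR k I n Q},
      KLR.E k I n Q μ * z = z →
      KLR.phi k I n Q m * (KLR.X k I n Q p * z)
        = KLR.X k I n Q (Equiv.swap (posR l) (posR m) p) * (KLR.phi k I n Q m * z) := by
    intro p μ z hz
    have h0 := phiX (Q := Q) m p hz
    rwa [hb] at h0
  have locTm : ∀ {μ : Fin n → I} {z : KLR k I n Q}, KLR.E k I n Q μ * z = z →
      KLR.E k I n Q (μ ∘ Equiv.swap (posR l) (posR m)) * (KLR.T k I n Q m * z)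
        = KLR.T k I n Q m * z := by
    intro μ z hz
    have h0 := locT (Q := Q) m hz
    rwa [hb] at h0
  have Tsqz0m : ∀ {μ : Fin n → I} {z : KLR k I n Q}, μ (posR l) = μ (posR m) →
      KLR.E k I n Q μ * z = z →
      KLR.T k I n Q m * (KLR.T k I n Q m * z) = 0 := by
    intro μ z hμ hz
    exact Tsqz0 (Q := Q) m hQdiag (by rw [hb]; exact hμ) hz
  have Tsqzm : ∀ {μ : Fin n → I} {z : KLR k I n Q}, KLR.E k I n Q μ * z = z →
      KLR.T k I n Q m * (KLR.T k I n Q m * z)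
        = evalQ (Q (μ (posR l)) (μ (posR m))) (KLR.X k I n Q (posR l))
            (KLR.X k I n Q (posR m)) * z := by
    intro μ z hz
    have h0 := Tsqz (Q := Q) m hz
    rwa [hb] at h0
  have braidzm : ∀ {μ : Fin n → I} {z : KLR k I n Q}, KLR.E k I n Q μ * z = z →
      KLR.T k I n Q m * (KLR.T k I n Q l * (KLR.T k I n Q m * z))
        = KLR.T k I n Q l * (KLR.T k I n Q m * (KLR.T k I n Q l * z))
          + (if μ (posL l) = μ (posR m) then
              QbarE (Q (μ (posL l)) (μ (posR l))) (KLR.X k I n Q (posL l))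
                (KLR.X k I n Q (posR m)) (KLR.X k I n Q (posR l)) * z
            else 0) :=
    fun hz => braidz l m hm hz
  have braidz_ne : ∀ {μ : Fin n → I} {z : KLR k I n Q}, ¬ μ (posL l) = μ (posR m) →
      KLR.E k I n Q μ * z = z →
      KLR.T k I n Q m * (KLR.T k I n Q l * (KLR.T k I n Q m * z))
        = KLR.T k I n Q l * (KLR.T k I n Q m * (KLR.T k I n Q l * z)) := by
    intro μ z hμ hz
    rw [braidzm hz, if_neg hμ, add_zero]
  have pE : KLR.E k I n Q ν * KLR.E k I n Q ν = KLR.E k I n Q ν := Eself ν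
  by_cases hij : ν (posL l) = ν (posR l) <;> by_cases hjk : ν (posR l) = ν (posR m)
  · -- C1 : i = j = k
    have hik : ν (posL l) = ν (posR m) := hij.trans hjk
    have hfix1 : ν ∘ Equiv.swap (posL l) (posR l) = ν := comp_swap_self ν _ _ hij
    have hfix2 : ν ∘ Equiv.swap (posR l) (posR m) = ν := comp_swap_self ν _ _ hjk
    have pSig : ∀ {z : KLR k I n Q}, KLR.E k I n Q ν * z = z →
        KLR.E k I n Q ν * (KLR.T k I n Q l * z) = KLR.T k I n Q l * z := by
      intro z h
      have h0 := locT (Q := Q) l h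
      rwa [hfix1] at h0
    have pTau : ∀ {z : KLR k I n Q}, KLR.E k I n Q ν * z = z →
        KLR.E k I n Q ν * (KLR.T k I n Q m * z) = KLR.T k I n Q m * z := by
      intro z h
      have h0 := locTm h
      rwa [hfix2] at h0
    have braid0 : ∀ {z : KLR k I n Q}, KLR.E k I n Q ν * z = z →
        KLR.T k I n Q m * (KLR.T k I n Q l * (KLR.T k I n Q m * z))
          = KLR.T k I n Q l * (KLR.T k I n Q m * (KLR.T k I n Q l * z)) := by
      intro z h
      rw [braidzm h, if_pos hik, hij, hQdiag, QbarE_zero, zero_mul, add_zero]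
    have cs := pSig pE
    have ct := pTau pE
    have cts := pTau cs
    have cst := pSig ct
    have sba : ∀ z : KLR k I n Q, KLR.X k I n Q (posR l) * (KLR.X k I n Q (posL l) * z)
        = KLR.X k I n Q (posL l) * (KLR.X k I n Q (posR l) * z) :=
      fun z => XXz (Q := Q) (posR l) (posL l) z
    have sca : ∀ z : KLR k I n Q, KLR.X k I n Q (posR m) * (KLR.X k I n Q (posL l) * z)
        = KLR.X k I n Q (posL l) * (KLR.X k I n Q (posR m) * z) :=
      fun z => XXz (Q := Q) (posR m) (posL l) z
    have scb : ∀ z : KLR k I n Q, KLR.X k I n Q (posR m) * (KLR.X k I n Q (posR l) * z)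
        = KLR.X k I n Q (posR l) * (KLR.X k I n Q (posR m) * z) :=
      fun z => XXz (Q := Q) (posR m) (posR l) z
    -- round 1
    rw [phiz_eq l hij pE, phiz_eqm hjk pE]
    simp only [mul_sub, mul_add]
    -- round 2
    rw [phiz_eqm hjk pE, phiz_eq l hij pE]
    simp only [mul_sub, mul_add]
    -- round 3
    rw [phiz_eq l hij pE, phiz_eqm hjk pE]
    -- cross Φl over single X's above τe
    rw [phiX (Q := Q) l (posR l) ct, e2, phiX (Q := Q) l (posR m) ct, e3]
    rw [phiz_eq l hij ct]
    simp only [mul_sub, mul_add]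
    -- Φm crossings (outer)
    rw [phiXm (posL l) (locX (Q := Q) (posL l) cst), e4]
    rw [phiXm (posL l) (locX (Q := Q) (posR l) cst), e4]
    rw [phiXm (posR m) (locX (Q := Q) (posL l) cst), e6]
    rw [phiXm (posR m) (locX (Q := Q) (posR l) cst), e6]
    rw [phiXm (posL l) ct, e4]
    rw [phiXm (posR m) ct, e6]
    rw [phiXm (posL l) cs, e4]
    rw [phiXm (posR l) cs, e5]
    -- Φm crossings (inner)
    rw [phiXm (posL l) cst, e4]
    rw [phiXm (posR l) cst, e5]
    -- Φm base expansions
    rw [phiz_eqm hjk cst]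
    rw [phiz_eqm hjk ct]
    rw [phiz_eqm hjk cs]
    rw [braid0 pE]
    rw [Tsqz0m hjk pE]
    simp only [mul_sub, mul_add, mul_zero, sub_zero, zero_add, add_zero]
    -- Φl crossings (outer)
    rw [phiX (Q := Q) l (posL l) (locX (Q := Q) (posR l) cts), e1]
    rw [phiX (Q := Q) l (posL l) (locX (Q := Q) (posR m) cts), e1]
    rw [phiX (Q := Q) l (posR m) (locX (Q := Q) (posR l) cts), e3]
    rw [phiX (Q := Q) l (posR m) (locX (Q := Q) (posR m) cts), e3]
    rw [phiX (Q := Q) l (posL l) cs, e1]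
    rw [phiX (Q := Q) l (posR m) cs, e3]
    -- Φl crossings (inner)
    rw [phiX (Q := Q) l (posR l) cts, e2]
    rw [phiX (Q := Q) l (posR m) cts, e3]
    -- Φl base expansions
    rw [phiz_eq l hij cts]
    rw [phiz_eq l hij cs]
    rw [Tsqz0 (Q := Q) l hQdiag hij pE]
    simp only [mul_sub, mul_add, mul_zero, sub_zero, zero_add, add_zero]
    simp only [sba, sca, scb]
    abel
  · -- C2 : i = j ≠ k
    have hik : ¬ ν (posL l) = ν (posR m) := fun h => hjk (hij.symm.trans h)
    have hfix1 : ν ∘ Equiv.swap (posL l) (posR l) = ν := comp_swap_self ν _ _ hij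
    rw [phiz_eq l hij pE]
    simp only [mul_sub, mul_add]
    have p1 := locT (Q := Q) l pE
    rw [hfix1] at p1
    rw [phiXm (posL l) p1, e4, phiXm (posR l) p1, e5]
    rw [phiz_nem hjk p1, phiz_nem hjk pE]
    have p2 := locTm p1
    have q1 := locTm pE
    have hcond : ¬ (ν ∘ Equiv.swap (posR l) (posR m)) (posL l)
        = (ν ∘ Equiv.swap (posR l) (posR m)) (posR l) := by
      simp only [Function.comp_apply, e4, e5]
      exact hik
    rw [phiz_ne l hcond q1]
    rw [phiX (Q := Q) l (posL l) p2, e1, phiX (Q := Q) l (posR m) p2, e3]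
    rw [phiz_ne l hcond p2]
    have q2 := locT (Q := Q) l q1
    rw [phiz_eqm (by simp only [Function.comp_apply, e2, e3, e4, e6]; exact hij) q2]
    rw [braidz_ne hik pE]
  · -- C3 : i ≠ j = k
    have hik : ¬ ν (posL l) = ν (posR m) := fun h => hij (h.trans hjk.symm)
    -- LHS
    rw [phiz_ne l hij pE]
    have p1 := locT (Q := Q) l pE
    have hc1 : ¬ (ν ∘ Equiv.swap (posL l) (posR l)) (posR l)
        = (ν ∘ Equiv.swap (posL l) (posR l)) (posR m) := by
      simp only [Function.comp_apply, e2, e3]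
      exact hik
    rw [phiz_nem hc1 p1]
    have p2 := locTm p1
    rw [phiz_eq l (by simp only [Function.comp_apply, e4, e5, e1, e3]; exact hjk) p2]
    -- RHS
    rw [phiz_eqm hjk pE]
    simp only [mul_sub, mul_add]
    have q1 := locTm pE
    rw [phiX (Q := Q) l (posR l) q1, e2, phiX (Q := Q) l (posR m) q1, e3]
    rw [phiz_ne l (by simp only [Function.comp_apply, e4, e5]; exact hik) q1]
    rw [phiz_ne l hij pE]
    have q2 := locT (Q := Q) l q1
    rw [phiXm (posL l) q2, e4, phiXm (posR m) q2, e6]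
    rw [phiz_nem (by simp only [Function.comp_apply, e2, e3, e4, e6]; exact hij) q2]
    rw [phiz_nem hc1 p1]
    rw [braidz_ne hik pE]
  · by_cases hik : ν (posL l) = ν (posR m)
    · -- C4 : i = k ≠ j
      -- LHS
      rw [phiz_ne l hij pE]
      have p1 := locT (Q := Q) l pE
      rw [phiz_eqm (by simp only [Function.comp_apply, e2, e3]; exact hik) p1]
      simp only [mul_sub, mul_add]
      have p2 := locTm p1
      rw [phiX (Q := Q) l (posR l) p2, e2, phiX (Q := Q) l (posR m) p2, e3]
      rw [phiz_ne l (by simp only [Function.comp_apply, e4, e5, e1, e3]; exact hjk) p2]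
      rw [phiz_ne l (by simp only [Function.comp_apply, e1, e2]; exact fun h => hij h.symm) p1]
      rw [Tsqz (Q := Q) l pE]
      -- RHS
      rw [phiz_nem hjk pE]
      have q1 := locTm pE
      rw [phiz_eq l (by simp only [Function.comp_apply, e4, e5]; exact hik) q1]
      simp only [mul_sub, mul_add]
      have q2 := locT (Q := Q) l q1
      rw [phiXm (posL l) q2, e4, phiXm (posR l) q2, e5]
      rw [phiz_nem (by simp only [Function.comp_apply, e2, e3, e4, e6]; exact hij) q2]
      rw [phiz_nem (by simp only [Function.comp_apply, e5, e6]; exact fun h => hjk h.symm) q1]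
      rw [Tsqzm pE]
      rw [braidzm pE, if_pos hik]
      simp only [mul_add]
      have hsym2 : evalQ (Q (ν (posR l)) (ν (posR m))) (KLR.X k I n Q (posR l))
          (KLR.X k I n Q (posR m))
          = evalQ (Q (ν (posL l)) (ν (posR l))) (KLR.X k I n Q (posR m))
              (KLR.X k I n Q (posR l)) := by
        rw [hQsymm (ν (posR l)) (ν (posR m))]
        rw [evalQ_swap _ _ _ (XXc (Q := Q) (posR l) (posR m))]
        rw [← hik]
      rw [hsym2]
      have hG : KLR.X k I n Q (posL l)
            * (QbarE (Q (ν (posL l)) (ν (posR l))) (KLR.X k I n Q (posL l))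
                (KLR.X k I n Q (posR m)) (KLR.X k I n Q (posR l)) * KLR.E k I n Q ν)
          - KLR.X k I n Q (posR m)
            * (QbarE (Q (ν (posL l)) (ν (posR l))) (KLR.X k I n Q (posL l))
                (KLR.X k I n Q (posR m)) (KLR.X k I n Q (posR l)) * KLR.E k I n Q ν)
          = evalQ (Q (ν (posL l)) (ν (posR l))) (KLR.X k I n Q (posL l))
              (KLR.X k I n Q (posR l)) * KLR.E k I n Q ν
            - evalQ (Q (ν (posL l)) (ν (posR l))) (KLR.X k I n Q (posR m))
              (KLR.X k I n Q (posR l)) * KLR.E k I n Q ν := by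
        rw [← mul_assoc, ← mul_assoc, ← sub_mul, ← sub_mul,
          sub_mul_QbarE _ _ _ _ (XXc (Q := Q) (posL l) (posR m))
            (fun c => commute_aeval (XXc (Q := Q) (posL l) (posR l)) c)
            (fun c => commute_aeval (XXc (Q := Q) (posR m) (posR l)) c),
          sub_mul]
      exact final_helper hG
    · -- C5 : all distinct
      rw [phiz_ne l hij pE]
      have p1 := locT (Q := Q) l pE
      rw [phiz_nem (by simp only [Function.comp_apply, e2, e3]; exact hik) p1]
      have p2 := locTm p1
      rw [phiz_ne l (by simp only [Function.comp_apply, e4, e5, e1, e3]; exact hjk) p2]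
      rw [phiz_nem hjk pE]
      have q1 := locTm pE
      rw [phiz_ne l (by simp only [Function.comp_apply, e4, e5]; exact hik) q1]
      have q2 := locT (Q := Q) l q1
      rw [phiz_nem (by simp only [Function.comp_apply, e2, e3, e4, e6]; exact hij) q2]
      exact (braidz_ne hik pE).symm
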